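/- arXiv:1412.3633 — 6 statements merged into one kernel-verified Lean document; each statement's English description precedes it below -/
import Mathlib

section
/- For every theory Σ and every M ⊆ T_Y, the semantic closure satisfies [M]_Σ = ⋃{[N]_Σ | N is a finite subset of M}; in particular, Mod(Σ) is an algebraic closure system. -/
namespace TAI

variable {Y : Type*}

/-- Time shift of a set of time-annotated attributes: `M + j`. -/
def shiftS (M : Set (Y × ℤ)) (j : ℤ) : Set (Y × ℤ) :=
  (fun p : Y × ℤ => (p.1, p.2 + j)) '' M

/-- Time shift of a finite set of time-annotated attributes: `A + j`. -/
def shiftF [DecidableEq Y] (A : Finset (Y × ℤ)) (j : ℤ) : Finset (Y × ℤ) :=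
  A.image (fun p => (p.1, p.2 + j))

/-- An attribute implication over `Y` annotated by time points: a pair
`(A, B)` of finite subsets of `T_Y = Y × ℤ`, read as `A ⇒ B`. -/
abbrev Fml (Y : Type*) := Finset (Y × ℤ) × Finset (Y × ℤ)

/-- `A ⇒ B` is true in `M ⊆ T_Y`: for every `i ∈ ℤ`, `A + i ⊆ M` implies `B + i ⊆ M`. -/
def Holds [DecidableEq Y] (M : Set (Y × ℤ)) (φ : Fml Y) : Prop :=
  ∀ i : ℤ, ↑(shiftF φ.1 i) ⊆ M → ↑(shiftF φ.2 i) ⊆ M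

/-- The models of a theory `T`. -/
def Mods [DecidableEq Y] (T : Set (Fml Y)) : Set (Set (Y × ℤ)) :=
  {M | ∀ φ ∈ T, Holds M φ}

/-- Semantic entailment: `T ⊨ φ`. -/
def Entails [DecidableEq Y] (T : Set (Fml Y)) (φ : Fml Y) : Prop :=
  ∀ M ∈ Mods T, Holds M φ

/-- Semantic closure `[M]_Σ`. -/
def semClos [DecidableEq Y] (T : Set (Fml Y)) (M : Set (Y × ℤ)) : Set (Y × ℤ) :=
  ⋂₀ {N | N ∈ Mods T ∧ M ⊆ N}

/-- Classical (time-point-free) truth: `M ⊨_PL A ⇒ B` iff `A ⊆ M` implies `B ⊆ M`. -/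
def HoldsPL (M : Set (Y × ℤ)) (φ : Fml Y) : Prop :=
  ↑φ.1 ⊆ M → ↑φ.2 ⊆ M

/-- Classical models. -/
def ModsPL (T : Set (Fml Y)) : Set (Set (Y × ℤ)) :=
  {M | ∀ φ ∈ T, HoldsPL M φ}

/-- Classical semantic entailment `⊨_PL`. -/
def EntailsPL (T : Set (Fml Y)) (φ : Fml Y) : Prop :=
  ∀ M ∈ ModsPL T, HoldsPL M φ

/-- `Σ^PL = {A + i ⇒ B + i | A ⇒ B ∈ Σ, i ∈ ℤ}`. -/
def shiftAll [DecidableEq Y] (T : Set (Fml Y)) : Set (Fml Y) :=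
  {ψ | ∃ φ ∈ T, ∃ i : ℤ, ψ = (shiftF φ.1 i, shiftF φ.2 i)}

/-- One step of the syntactic closure construction. -/
def synStep [DecidableEq Y] (T : Set (Fml Y)) (M : Set (Y × ℤ)) : Set (Y × ℤ) :=
  M ∪ ⋃₀ {S | ∃ φ ∈ T, ∃ i : ℤ, ↑(shiftF φ.1 i) ⊆ M ∧ S = (↑(shiftF φ.2 i) : Set (Y × ℤ))}

/-- `M_Σ^n`. -/
def synIter [DecidableEq Y] (T : Set (Fml Y)) (M : Set (Y × ℤ)) : ℕ → Set (Y × ℤ)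
  | 0 => M
  | n + 1 => synStep T (synIter T M n)

/-- The syntactic closure `M_Σ^ω`. -/
def synClos [DecidableEq Y] (T : Set (Fml Y)) (M : Set (Y × ℤ)) : Set (Y × ℤ) :=
  ⋃ n : ℕ, synIter T M n

/-- Provability from `T` using the rules (Ax), (Cut) and (Shf). -/
inductive Prov [DecidableEq Y] (T : Set (Fml Y)) : Fml Y → Prop
  | hyp {φ : Fml Y} : φ ∈ T → Prov T φ
  | ax (A B : Finset (Y × ℤ)) : Prov T (A ∪ B, A)
  | cut {A B C D : Finset (Y × ℤ)} :
      Prov T (A, B) → Prov T (B ∪ C, D) → Prov T (A ∪ C, D)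
  | shf {A B : Finset (Y × ℤ)} (i : ℤ) :
      Prov T (A, B) → Prov T (shiftF A i, shiftF B i)

/-- Provability from `T` using only the rules (Ax) and (Cut) (no time shifts). -/
inductive ProvAC [DecidableEq Y] (T : Set (Fml Y)) : Fml Y → Prop
  | hyp {φ : Fml Y} : φ ∈ T → ProvAC T φ
  | ax (A B : Finset (Y × ℤ)) : ProvAC T (A ∪ B, A)
  | cut {A B C D : Finset (Y × ℤ)} :
      ProvAC T (A, B) → ProvAC T (B ∪ C, D) → ProvAC T (A ∪ C, D)

/-- Provability from `T` using the rules (Ax) and (Cut_i). -/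
inductive ProvCuti [DecidableEq Y] (T : Set (Fml Y)) : Fml Y → Prop
  | hyp {φ : Fml Y} : φ ∈ T → ProvCuti T φ
  | ax (A B : Finset (Y × ℤ)) : ProvCuti T (A ∪ B, A)
  | cuti {A B C D : Finset (Y × ℤ)} (i : ℤ) :
      ProvCuti T (A, shiftF B i) → ProvCuti T (B ∪ C, D) →
      ProvCuti T (A ∪ shiftF C i, shiftF D i)

/-- Provability from `T` using the rules (Ref) and (Sim_i). -/
inductive ProvRS [DecidableEq Y] (T : Set (Fml Y)) : Fml Y → Prop
  | hyp {φ : Fml Y} : φ ∈ T → ProvRS T φ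
  | ref (A : Finset (Y × ℤ)) : ProvRS T (A, A)
  | simi {A B C D : Finset (Y × ℤ)} (i : ℤ) :
      ProvRS T (A, shiftF B i) → ProvRS T (C, D) →
      ProvRS T (A ∪ shiftF (C \ B) i, shiftF D i)

/-- The closure operator induced by a closure system `S`. -/
def closOp (S : Set (Set (Y × ℤ))) (M : Set (Y × ℤ)) : Set (Y × ℤ) :=
  ⋂₀ {N | N ∈ S ∧ M ⊆ N}

/-- The least time point occurring in a finite set (`0` for the empty set). -/
def lo (A : Finset (Y × ℤ)) : ℤ :=
  WithTop.untopD 0 (A.image Prod.snd).min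

/-- The greatest time point occurring in a finite set (`0` for the empty set). -/
def hi (A : Finset (Y × ℤ)) : ℤ :=
  WithBot.unbotD 0 (A.image Prod.snd).max

/-- A formula `A ⇒ B` is predictive if `A ≠ ∅`, `B ≠ ∅`, and every time point in
`A` is less than or equal to every time point in `B`. -/
def Predictive (φ : Fml Y) : Prop :=
  φ.1.Nonempty ∧ φ.2.Nonempty ∧ ∀ p ∈ φ.1, ∀ q ∈ φ.2, p.2 ≤ q.2

lemma subset_semClos [DecidableEq Y] (T : Set (Fml Y)) (M : Set (Y × ℤ)) :
    M ⊆ semClos T M := fun _ hx _ hP => hP.2 hx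

lemma semClos_mono [DecidableEq Y] (T : Set (Fml Y)) {M M' : Set (Y × ℤ)}
    (h : M ⊆ M') : semClos T M ⊆ semClos T M' := fun x hx P hP =>
  hx P ⟨hP.1, h.trans hP.2⟩

lemma semClos_mods [DecidableEq Y] (T : Set (Fml Y)) (M : Set (Y × ℤ)) :
    semClos T M ∈ Mods T := by
  intro φ hφ i h x hx P hP
  exact hP.1 φ hφ i (fun y hy => h hy P hP) hx

/-- The semantic closure satisfies
`[M]_Σ = ⋃ {[N]_Σ | N finite, N ⊆ M}`; i.e. `Mod(Σ)` is an algebraic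
closure system. -/
theorem semClos_algebraic [DecidableEq Y] [Fintype Y] [Nonempty Y]
    (T : Set (Fml Y)) (M : Set (Y × ℤ)) :
    semClos T M = ⋃₀ {P | ∃ N : Finset (Y × ℤ), ↑N ⊆ M ∧ P = semClos T ↑N} := by
  apply Set.Subset.antisymm
  · -- the union is a model containing M
    intro x hx
    apply hx
    constructor
    · -- union is a model
      intro φ hφ i h
      have hch : ∀ y ∈ shiftF φ.1 i, ∃ N : Finset (Y × ℤ),
          ↑N ⊆ M ∧ y ∈ semClos T ↑N := by
        intro y hy
        obtain ⟨P, ⟨N, hNM, rfl⟩, hyP⟩ := h hy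
        exact ⟨N, hNM, hyP⟩
      choose f hf1 hf2 using hch
      set N : Finset (Y × ℤ) :=
        (shiftF φ.1 i).attach.biUnion (fun y => f y.1 y.2) with hN
      have hNM : (↑N : Set (Y × ℤ)) ⊆ M := by
        intro z hz
        simp only [hN, Finset.coe_biUnion, Finset.mem_coe, Finset.mem_attach,
          Set.mem_iUnion, Set.iUnion_true] at hz
        obtain ⟨y, hzy⟩ := hz
        exact hf1 y.1 y.2 hzy
      have hsub : (↑(shiftF φ.1 i) : Set (Y × ℤ)) ⊆ semClos T ↑N := by
        intro y hy
        refine semClos_mono T ?_ (hf2 y hy)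
        intro z hz
        simp only [hN, Finset.coe_biUnion, Finset.mem_coe, Finset.mem_attach,
          Set.mem_iUnion, Set.iUnion_true]
        exact ⟨⟨y, hy⟩, hz⟩
      have := semClos_mods T (↑N : Set (Y × ℤ)) φ hφ i hsub
      intro z hz
      exact ⟨semClos T ↑N, ⟨N, hNM, rfl⟩, this hz⟩
    · intro y hy
      exact ⟨semClos T ({y} : Finset (Y × ℤ)),
        ⟨{y}, by simpa using hy, rfl⟩,
        subset_semClos T _ (by simp)⟩
  · rintro x ⟨P, ⟨N, hNM, rfl⟩, hx⟩
    exact semClos_mono T hNM hx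

end TAI
end

section
/- Let S ⊆ 2^{T_Y} be an algebraic closure system that is closed under time shifts. Then there exists a theory Σ (a set of attribute implications over Y annotated by time points) such that S = Mod(Σ). -/
namespace TAI

variable {Y : Type*}

lemma shiftF_zero [DecidableEq Y] (A : Finset (Y × ℤ)) : shiftF A 0 = A := by
  ext p; simp [shiftF]

lemma closOp_mem (S : Set (Set (Y × ℤ)))
    (hinter : ∀ 𝓐 ⊆ S, ⋂₀ 𝓐 ∈ S) (M : Set (Y × ℤ)) : closOp S M ∈ S :=
  hinter _ (fun _ hN => hN.1)

lemma subset_closOp (S : Set (Set (Y × ℤ))) (M : Set (Y × ℤ)) : M ⊆ closOp S M :=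
  fun _ hx _ hN => hN.2 hx

lemma closOp_le (S : Set (Set (Y × ℤ))) {M N : Set (Y × ℤ)} (hN : N ∈ S)
    (hMN : M ⊆ N) : closOp S M ⊆ N :=
  Set.sInter_subset_of_mem ⟨hN, hMN⟩

/-- Every algebraic closure system closed under time shifts is
the system of models of some theory. -/
theorem algebraic_shift_closed_is_mods [DecidableEq Y] [Fintype Y] [Nonempty Y]
    (S : Set (Set (Y × ℤ)))
    (hinter : ∀ 𝓐 ⊆ S, ⋂₀ 𝓐 ∈ S)
    (halg : ∀ M : Set (Y × ℤ),
      closOp S M = ⋃₀ {P | ∃ N : Finset (Y × ℤ), ↑N ⊆ M ∧ P = closOp S ↑N})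
    (hshift : ∀ M ∈ S, ∀ i : ℤ, shiftS M i ∈ S) :
    ∃ T : Set (Fml Y), S = Mods T := by
  classical
  refine ⟨{φ | (↑φ.2 : Set (Y × ℤ)) ⊆ closOp S ↑φ.1}, ?_⟩
  ext M
  constructor
  · intro hM φ hφ i hA
    -- shift M by -i
    have hM' : shiftS M (-i) ∈ S := hshift M hM (-i)
    have h1 : (↑φ.1 : Set (Y × ℤ)) ⊆ shiftS M (-i) := by
      intro p hp
      refine ⟨(p.1, p.2 + i), hA ?_, by simp⟩
      exact_mod_cast Finset.mem_image.2 ⟨p, hp, rfl⟩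
    have h2 : (↑φ.2 : Set (Y × ℤ)) ⊆ shiftS M (-i) :=
      hφ.trans (closOp_le S hM' h1)
    intro q hq
    rcases Finset.mem_image.1 (by exact_mod_cast hq) with ⟨p, hp, rfl⟩
    rcases h2 hp with ⟨m, hm, hme⟩
    have : m = (p.1, p.2 + i) := by
      obtain ⟨m1, m2⟩ := m
      rw [Prod.ext_iff] at hme
      simp only at hme
      simp only [Prod.mk.injEq]
      exact ⟨hme.1, by linarith [hme.2]⟩
    rwa [this] at hm
  · intro hM
    have hclos : closOp S M ⊆ M := by
      rw [halg M]
      rintro x ⟨P, ⟨N, hNM, rfl⟩, hx⟩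
      have hφ : ((N, ({x} : Finset (Y × ℤ))) : Fml Y) ∈
          {φ : Fml Y | (↑φ.2 : Set (Y × ℤ)) ⊆ closOp S ↑φ.1} := by
        simpa using hx
      have := hM _ hφ 0 (by rw [shiftF_zero]; exact hNM)
      rw [shiftF_zero] at this
      simpa using this
    have : closOp S M = M := Set.Subset.antisymm hclos (subset_closOp S M)
    rw [← this]
    exact closOp_mem S hinter M

end TAI
end

section
/- (Soundness) For every theory Σ and every attribute implication A ⇒ B annotated by time points, if Σ ⊢ A ⇒ B then Σ ⊨ A ⇒ B. -/
namespace TAI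

variable {Y : Type*}

lemma shiftF_union [DecidableEq Y] (A B : Finset (Y × ℤ)) (i : ℤ) :
    shiftF (A ∪ B) i = shiftF A i ∪ shiftF B i := Finset.image_union _ _

lemma shiftF_shiftF [DecidableEq Y] (A : Finset (Y × ℤ)) (i j : ℤ) :
    shiftF (shiftF A i) j = shiftF A (i + j) := by
  unfold shiftF
  rw [Finset.image_image]
  congr 1
  funext p
  simp [add_assoc]

lemma soundness_aux [DecidableEq Y] (T : Set (Fml Y)) (phi : Fml Y)
    (h : Prov T phi) (M : Set (Y × ℤ)) (hM : M ∈ Mods T) : Holds M phi := by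
  induction h with
  | hyp hphi => exact hM _ hphi
  | ax A B =>
      intro i hsub
      rw [shiftF_union] at hsub
      exact fun x hx => hsub (by simpa using Finset.mem_union_left _ (by simpa using hx))
  | cut h1 h2 ih1 ih2 =>
      intro i hsub
      simp only [Holds] at *
      rw [shiftF_union, Finset.coe_union] at hsub
      have hA := Set.union_subset_iff.mp hsub
      have hB := ih1 i hA.1
      exact ih2 i (by rw [shiftF_union, Finset.coe_union]; exact Set.union_subset hB hA.2)
  | shf i h ih =>
      intro j hsub
      simp only [Holds] at *
      rw [shiftF_shiftF] at hsub
      have := ih (i + j) hsub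
      rwa [shiftF_shiftF]

/-- Soundness: if `Σ ⊢ A ⇒ B` then `Σ ⊨ A ⇒ B`. -/
theorem soundness [DecidableEq Y] [Fintype Y] [Nonempty Y]
    (T : Set (Fml Y)) (A B : Finset (Y × ℤ)) :
    Prov T (A, B) → Entails T (A, B) :=
  fun h M hM => soundness_aux T (A, B) h M hM

end TAI
end

section
/- (Completeness) For every theory Σ and every attribute implication A ⇒ B annotated by time points, Σ ⊢ A ⇒ B if and only if Σ ⊨ A ⇒ B. -/
namespace TAI

variable {Y : Type*}

lemma prov_refl [DecidableEq Y] (T : Set (Fml Y)) (A : Finset (Y × ℤ)) :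
    Prov T (A, A) := by
  have := Prov.ax (T := T) A ∅
  simpa using this

lemma prov_empty [DecidableEq Y] (T : Set (Fml Y)) (A : Finset (Y × ℤ)) :
    Prov T (A, ∅) := by
  have := Prov.ax (T := T) ∅ A
  simpa using this

lemma prov_trans [DecidableEq Y] {T : Set (Fml Y)} {A B C : Finset (Y × ℤ)}
    (h1 : Prov T (A, B)) (h2 : Prov T (B, C)) : Prov T (A, C) := by
  have h2' : Prov T (B ∪ ∅, C) := by simpa using h2
  have := Prov.cut h1 h2'
  simpa using this

lemma prov_proj [DecidableEq Y] {T : Set (Fml Y)} {A B : Finset (Y × ℤ)}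
    {q : Y × ℤ} (hq : q ∈ B) (h : Prov T (A, B)) : Prov T (A, ({q} : Finset (Y × ℤ))) := by
  have hax := Prov.ax (T := T) {q} B
  have hsub : ({q} : Finset (Y × ℤ)) ∪ B = B := Finset.union_eq_right.mpr (by simpa using hq)
  rw [hsub] at hax
  exact prov_trans h hax

lemma prov_add [DecidableEq Y] {T : Set (Fml Y)} {A B C : Finset (Y × ℤ)}
    (h1 : Prov T (A, B)) (h2 : Prov T (A, C)) : Prov T (A, B ∪ C) := by
  have hBC : Prov T (B ∪ C, B ∪ C) := prov_refl T (B ∪ C)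
  have h3 : Prov T (A ∪ C, B ∪ C) := Prov.cut h1 hBC
  have h3' : Prov T (C ∪ A, B ∪ C) := by rwa [Finset.union_comm] at h3
  have h4 : Prov T (A ∪ A, B ∪ C) := Prov.cut h2 h3'
  simpa using h4

lemma prov_of_forall_mem [DecidableEq Y] {T : Set (Fml Y)} {A : Finset (Y × ℤ)}
    (B : Finset (Y × ℤ)) (h : ∀ p ∈ B, Prov T (A, ({p} : Finset (Y × ℤ)))) :
    Prov T (A, B) := by
  induction B using Finset.induction_on with
  | empty => exact prov_empty T A
  | @insert a s _ ih =>
      have h1 : Prov T (A, ({a} : Finset (Y × ℤ))) := h a (Finset.mem_insert_self a s)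
      have h2 : Prov T (A, s) := ih fun p hp => h p (Finset.mem_insert_of_mem hp)
      have := prov_add h1 h2
      rw [Finset.insert_eq]
      exact this

lemma prov_sound [DecidableEq Y] {T : Set (Fml Y)} {φ : Fml Y}
    (h : Prov T φ) : Entails T φ := by
  induction h with
  | hyp hφ => exact fun M hM => hM _ hφ
  | ax A B =>
      intro M hM i hsub
      rw [shiftF_union] at hsub
      exact fun p hp => hsub (by simpa using Or.inl hp)
  | @cut A B C D h1 h2 ih1 ih2 =>
      intro M hM i hsub
      rw [shiftF_union] at hsub
      have hA : ↑(shiftF A i) ⊆ M := fun p hp => hsub (by simpa using Or.inl hp)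
      have hC : ↑(shiftF C i) ⊆ M := fun p hp => hsub (by simpa using Or.inr hp)
      have hB := ih1 M hM i hA
      refine ih2 M hM i ?_
      rw [shiftF_union]
      intro p hp
      rcases Finset.mem_union.mp (by simpa using hp) with h' | h'
      · exact hB h'
      · exact hC h'
  | shf i _ ih =>
      intro M hM j hsub
      rw [shiftF_shiftF] at hsub ⊢
      exact ih M hM (i + j) hsub

/-- Completeness: `Σ ⊢ A ⇒ B` iff `Σ ⊨ A ⇒ B`. -/
theorem completeness [DecidableEq Y] [Fintype Y] [Nonempty Y]
    (T : Set (Fml Y)) (A B : Finset (Y × ℤ)) :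
    Prov T (A, B) ↔ Entails T (A, B) := by
  constructor
  · exact prov_sound
  · intro hent
    set M : Set (Y × ℤ) := {p | Prov T (A, ({p} : Finset (Y × ℤ)))} with hMdef
    have hA : ↑A ⊆ M := fun p hp => prov_proj (by simpa using hp) (prov_refl T A)
    have hM : M ∈ Mods T := by
      intro φ hφ i hsub
      obtain ⟨C, D⟩ := φ
      have h1 : Prov T (A, shiftF C i) :=
        prov_of_forall_mem _ fun p hp => hsub (by simpa using hp)
      have h2 : Prov T (shiftF C i, shiftF D i) := Prov.shf i (Prov.hyp hφ)
      have h3 : Prov T (A, shiftF D i) := prov_trans h1 h2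
      exact fun q hq => prov_proj (by simpa using hq) h3
    have hholds := hent M hM 0
    rw [show ((A, B) : Fml Y).1 = A from rfl, show ((A, B) : Fml Y).2 = B from rfl,
      shiftF_zero, shiftF_zero] at hholds
    have hB : ↑B ⊆ M := hholds hA
    exact prov_of_forall_mem B fun p hp => hB (by simpa using hp)

end TAI
end

section
/- For every theory Σ and every M ⊆ T_Y, the semantic closure and the syntactic closure coincide: [M]_Σ = M_Σ^ω. -/
namespace TAI

variable {Y : Type*}

/-- the semantic and syntactic closures coincide:
`[M]_Σ = M_Σ^ω`. -/
theorem semClos_eq_synClos [DecidableEq Y] [Fintype Y] [Nonempty Y]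
    (T : Set (Fml Y)) (M : Set (Y × ℤ)) :
    semClos T M = synClos T M := by
  have hmono : ∀ n m, n ≤ m → synIter T M n ⊆ synIter T M m := by
    intro n m hnm
    induction hnm with
    | refl => exact subset_rfl
    | step h ih => exact ih.trans (Set.subset_union_left)
  apply subset_antisymm
  · -- semClos ⊆ synClos : synClos is a model containing M
    have hM : M ⊆ synClos T M := Set.subset_iUnion (synIter T M) 0
    have hmod : synClos T M ∈ Mods T := by
      intro φ hφ i hsub
      -- the finite set (shiftF φ.1 i) lies in some synIter n
      obtain ⟨I, hIfin, hI⟩ := Set.finite_subset_iUnion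
        (Set.toFinite (↑(shiftF φ.1 i) : Set (Y × ℤ))) hsub
      obtain ⟨n, hn⟩ : ∃ n, ∀ m ∈ I, m ≤ n := by
        rcases hIfin.bddAbove with ⟨n, hn⟩
        exact ⟨n, fun m hm => hn hm⟩
      have hsub' : ↑(shiftF φ.1 i) ⊆ synIter T M n := by
        intro x hx
        rcases Set.mem_iUnion₂.1 (hI hx) with ⟨m, hm, hxm⟩
        exact hmono m n (hn m hm) hxm
      have : ↑(shiftF φ.2 i) ⊆ synIter T M (n + 1) := by
        intro x hx
        exact Or.inr ⟨↑(shiftF φ.2 i), ⟨φ, hφ, i, hsub', rfl⟩, hx⟩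
      exact this.trans (Set.subset_iUnion (synIter T M) (n + 1))
    exact Set.sInter_subset_of_mem ⟨hmod, hM⟩
  · -- synClos ⊆ semClos
    intro x hx
    rcases Set.mem_iUnion.1 hx with ⟨n, hn⟩
    intro N hN
    rcases hN with ⟨hNmod, hMN⟩
    have key : ∀ m, synIter T M m ⊆ N := by
      intro m
      induction m with
      | zero => exact hMN
      | succ k ih =>
        intro y hy
        rcases (Set.mem_union _ _ _).1 hy with hy | hy
        · exact ih hy
        · rcases hy with ⟨S, ⟨φ, hφ, i, hsub, rfl⟩, hyS⟩
          exact hNmod φ hφ i (fun z hz => ih (hsub hz)) hyS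
    exact key n hn

end TAI
end

section
/- The deduction system consisting of the rules (Ax) and (Cut_i) — where (Cut_i) infers A ∪ (C + i) ⇒ D + i from A ⇒ B + i and B ∪ C ⇒ D, for any i ∈ ℤ — proves exactly the same formulas from any theory Σ as the system consisting of (Ax), (Cut), and (Shf). -/
namespace TAI

variable {Y : Type*}

lemma shiftF_empty [DecidableEq Y] (i : ℤ) : shiftF (∅ : Finset (Y × ℤ)) i = ∅ := by
  simp [shiftF]

/-- the system with rules (Ax) and (Cut_i) proves exactly the
same formulas from any theory as the system with (Ax), (Cut) and (Shf). -/
theorem prov_iff_provCuti [DecidableEq Y] [Fintype Y] [Nonempty Y] :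
    ∀ (T : Set (Fml Y)) (φ : Fml Y), Prov T φ ↔ ProvCuti T φ := by
  intro T φ
  constructor
  · intro h
    induction h with
    | hyp h => exact ProvCuti.hyp h
    | ax A B => exact ProvCuti.ax A B
    | cut h1 h2 ih1 ih2 =>
        rename_i A B C D
        have := ProvCuti.cuti 0 (by rwa [shiftF_zero]) ih2
        rwa [shiftF_zero, shiftF_zero] at this
    | shf i h ih =>
        rename_i A B
        have hax : ProvCuti T (shiftF A i, shiftF A i) := by
          have := ProvCuti.ax (T := T) (shiftF A i) (shiftF A i)
          rwa [Finset.union_self] at this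
        have h2 : ProvCuti T (A ∪ ∅, B) := by rwa [Finset.union_empty]
        have := ProvCuti.cuti i hax h2
        rwa [shiftF_empty, Finset.union_empty] at this
  · intro h
    induction h with
    | hyp h => exact Prov.hyp h
    | ax A B => exact Prov.ax A B
    | cuti i h1 h2 ih1 ih2 =>
        rename_i A B C D
        have := Prov.shf i ih2
        rw [shiftF_union] at this
        exact Prov.cut ih1 this

end TAI
end
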